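/- Let M be an n×n real matrix with constants c > 0, λ > 0 such that ‖exp(tM)‖ ≤ c·e^{−λt} for all t ≥ 0. Suppose σ : [0, ∞) → ℝⁿ is differentiable with σ′(t) = −Mᵀ·σ(t) for all t ≥ 0 and ∫₀^∞ ‖σ(t)‖² dt < ∞. Then σ(t) = 0 for all t ≥ 0. -/

import Mathlib

open Matrix MeasureTheory

attribute [local instance] Matrix.linftyOpNormedAddCommGroup
  Matrix.linftyOpNormedRing Matrix.linftyOpNormedAlgebra

section Aux

/-- Entry projection as a linear map on matrices. -/
def matrixEntryLM {n : ℕ} (i j : Fin n) : Matrix (Fin n) (Fin n) ℝ →ₗ[ℝ] ℝ where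
  toFun A := A i j
  map_add' A B := rfl
  map_smul' r A := rfl

lemma linfty_nnnorm_entry_le {n : ℕ} (A : Matrix (Fin n) (Fin n) ℝ) (i j : Fin n) :
    ‖A i j‖₊ ≤ ‖A‖₊ := by
  rw [Matrix.linfty_opNNNorm_def]
  refine le_trans ?_ (Finset.le_sup (Finset.mem_univ i))
  exact Finset.single_le_sum (f := fun j => ‖A i j‖₊) (fun _ _ => zero_le)
    (Finset.mem_univ j)

lemma linfty_norm_transpose_le {n : ℕ} (A : Matrix (Fin n) (Fin n) ℝ) :
    ‖Aᵀ‖ ≤ n * ‖A‖ := by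
  have h : ‖Aᵀ‖₊ ≤ (n : NNReal) * ‖A‖₊ := by
    rw [Matrix.linfty_opNNNorm_def]
    refine Finset.sup_le fun j _ => ?_
    calc ∑ i, ‖Aᵀ j i‖₊ ≤ ∑ _i : Fin n, ‖A‖₊ :=
          Finset.sum_le_sum fun i _ => linfty_nnnorm_entry_le A i j
      _ = (n : NNReal) * ‖A‖₊ := by simp [Finset.sum_const, Finset.card_univ, mul_comm]
  exact_mod_cast h

end Aux

/-- Uniqueness part of Lemma 2(iii) of the paper: with `M` exponentially stable, any
square-integrable solution on `[0, ∞)` of the anti-stable homogeneous equation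
`σ′ = −Mᵀσ` vanishes identically. -/
theorem antistable_l2_solution_zero
    {n : ℕ} (M : Matrix (Fin n) (Fin n) ℝ)
    (c lam : ℝ) (hc : 0 < c) (hlam : 0 < lam)
    (hstab : ∀ t : ℝ, 0 ≤ t →
      ‖NormedSpace.exp (t • M)‖ ≤ c * Real.exp (-lam * t))
    (σ : ℝ → Fin n → ℝ)
    (hσderiv : ∀ t : ℝ, 0 ≤ t →
      HasDerivWithinAt σ (-(Mᵀ *ᵥ σ t)) (Set.Ici (0 : ℝ)) t)
    (hσl2 : ∫⁻ t in Set.Ici (0 : ℝ), ENNReal.ofReal (‖σ t‖ ^ 2) < ⊤) :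
    ∀ t : ℝ, 0 ≤ t → σ t = 0 := by
  rcases Nat.eq_zero_or_pos n with hn | hn
  · exact fun t _ => funext fun i => absurd i.isLt (by omega)
  set E : ℝ → Matrix (Fin n) (Fin n) ℝ := fun s => NormedSpace.exp (s • Mᵀ) with hEdef
  -- derivative of the matrix exponential
  have hEd : ∀ s : ℝ, HasDerivAt E (Mᵀ * E s) s := fun s =>
    _root_.hasDerivAt_exp_smul_const' Mᵀ s
  -- entrywise derivative
  have hEij : ∀ (i j : Fin n) (s : ℝ),
      HasDerivAt (fun u => E u i j) ((Mᵀ * E s) i j) s := by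
    intro i j s
    have hL := (LinearMap.toContinuousLinearMap (matrixEntryLM i j)).hasFDerivAt
      (x := E s)
    exact (hL.comp_hasDerivAt s (hEd s))
  -- the function `g s = E s *ᵥ σ s` has zero right derivative on `[0, ∞)`
  set g : ℝ → Fin n → ℝ := fun s => E s *ᵥ σ s with hgdef
  have hcomm : ∀ s : ℝ, Mᵀ * E s = E s * Mᵀ := fun s =>
    (((Commute.refl Mᵀ).smul_right s).exp_right).eq
  have hg : ∀ s : ℝ, 0 ≤ s → HasDerivWithinAt g 0 (Set.Ici (0:ℝ)) s := by
    intro s hs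
    rw [hasDerivWithinAt_pi]
    intro i
    have hσj : ∀ j : Fin n,
        HasDerivWithinAt (fun u => σ u j) ((-(Mᵀ *ᵥ σ s)) j) (Set.Ici (0:ℝ)) s :=
      fun j => hasDerivWithinAt_pi.1 (hσderiv s hs) j
    have hsum : HasDerivWithinAt (fun u => ∑ j, E u i j * σ u j)
        (∑ j, ((Mᵀ * E s) i j * σ s j + E s i j * (-(Mᵀ *ᵥ σ s)) j))
        (Set.Ici (0:ℝ)) s := by
      refine HasDerivWithinAt.fun_sum fun j _ => ?_
      exact ((hEij i j s).hasDerivWithinAt).mul (hσj j)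
    have hval : (∑ j, ((Mᵀ * E s) i j * σ s j + E s i j * (-(Mᵀ *ᵥ σ s)) j)) = 0 := by
      rw [Finset.sum_add_distrib]
      have h1 : (∑ j, (Mᵀ * E s) i j * σ s j) = ((Mᵀ * E s) *ᵥ σ s) i := rfl
      have h2 : (∑ j, E s i j * (-(Mᵀ *ᵥ σ s)) j) = (E s *ᵥ (-(Mᵀ *ᵥ σ s))) i := rfl
      rw [h1, h2, Matrix.mulVec_neg, Matrix.mulVec_mulVec, ← hcomm s]
      simp
    rw [hval] at hsum
    have hfun : (fun u => g u i) = fun u => ∑ j, E u i j * σ u j := by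
      funext u; simp [hgdef, Matrix.mulVec, dotProduct]
    rw [hfun]
    simpa using hsum
  -- hence `g` is constant on `[0, ∞)`, equal to `σ 0`
  have hE0 : E 0 = 1 := by simp [hEdef, NormedSpace.exp_zero]
  have hkey : ∀ s : ℝ, 0 ≤ s → E s *ᵥ σ s = σ 0 := by
    intro s hs
    have hcont : ContinuousOn g (Set.Icc (0:ℝ) s) :=
      fun x hx => ((hg x hx.1).continuousWithinAt).mono
        (fun y hy => hy.1)
    have hder : ∀ x ∈ Set.Ico (0:ℝ) s, HasDerivWithinAt g 0 (Set.Ici x) x :=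
      fun x hx => (hg x hx.1).mono (Set.Ici_subset_Ici.2 hx.1)
    have := constant_of_has_deriv_right_zero hcont hder s (Set.mem_Icc.2 ⟨hs, le_refl s⟩)
    have hg0 : g 0 = σ 0 := by simp [hgdef, hE0, Matrix.one_mulVec]
    rw [← hg0]; exact this
  -- norm estimate on `E s`
  have hEnorm : ∀ s : ℝ, 0 ≤ s → ‖E s‖ ≤ n * c * Real.exp (-lam * s) := by
    intro s hs
    have h1 : E s = (NormedSpace.exp (s • M))ᵀ := by
      rw [hEdef]
      simp only [← Matrix.transpose_smul, Matrix.exp_transpose]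
    rw [h1]
    calc ‖(NormedSpace.exp (s • M))ᵀ‖ ≤ n * ‖NormedSpace.exp (s • M)‖ :=
          linfty_norm_transpose_le _
      _ ≤ n * (c * Real.exp (-lam * s)) := by
          refine mul_le_mul_of_nonneg_left (hstab s hs) (by positivity)
      _ = n * c * Real.exp (-lam * s) := by ring
  -- show `σ 0 = 0`
  have hσ0 : σ 0 = 0 := by
    by_contra h0
    have hσ0pos : 0 < ‖σ 0‖ := norm_pos_iff.2 h0
    have hnc : (0:ℝ) < n * c := by positivity
    set K : ℝ := ‖σ 0‖ / (n * c) with hKdef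
    have hKpos : 0 < K := div_pos hσ0pos hnc
    -- pointwise lower bound
    have hlower : ∀ s : ℝ, 0 ≤ s → K ≤ ‖σ s‖ := by
      intro s hs
      have h1 : ‖σ 0‖ ≤ ‖E s‖ * ‖σ s‖ := by
        rw [← hkey s hs]; exact Matrix.linfty_opNorm_mulVec _ _
      have h2 : ‖E s‖ ≤ n * c := by
        refine (hEnorm s hs).trans ?_
        have : Real.exp (-lam * s) ≤ 1 := by
          rw [Real.exp_le_one_iff]
          nlinarith
        nlinarith
      have h3 : ‖σ 0‖ ≤ (n * c) * ‖σ s‖ := by nlinarith [norm_nonneg (σ s), norm_nonneg (E s)]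
      rw [hKdef, div_le_iff₀ hnc]
      linarith [h3]
    -- contradiction with square integrability
    have hineq : ∫⁻ t in Set.Ici (0:ℝ), ENNReal.ofReal (K ^ 2)
        ≤ ∫⁻ t in Set.Ici (0:ℝ), ENNReal.ofReal (‖σ t‖ ^ 2) := by
      refine lintegral_mono_ae ?_
      refine (ae_restrict_iff' measurableSet_Ici).2 ?_
      filter_upwards with t ht
      exact ENNReal.ofReal_le_ofReal (by nlinarith [hlower t ht, norm_nonneg (σ t)])
    have hconst : ∫⁻ _t in Set.Ici (0:ℝ), ENNReal.ofReal (K ^ 2) = ⊤ := by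
      rw [setLIntegral_const, Real.volume_Ici, ENNReal.mul_top]
      simp only [ne_eq, ENNReal.ofReal_eq_zero, not_le]
      positivity
    rw [hconst] at hineq
    exact absurd (lt_of_le_of_lt hineq hσl2) (lt_irrefl ⊤)
  -- conclude
  intro t ht
  have hinv : NormedSpace.exp (-(t • Mᵀ)) * E t = 1 := by
    rw [hEdef]
    beta_reduce
    rw [← Matrix.exp_add_of_commute _ _ (((Commute.refl (t • Mᵀ)).neg_left))]
    simp [NormedSpace.exp_zero]
  have h1 : E t *ᵥ σ t = 0 := by rw [hkey t ht, hσ0]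
  calc σ t = (1 : Matrix (Fin n) (Fin n) ℝ) *ᵥ σ t := by rw [Matrix.one_mulVec]
    _ = (NormedSpace.exp (-(t • Mᵀ)) * E t) *ᵥ σ t := by rw [hinv]
    _ = NormedSpace.exp (-(t • Mᵀ)) *ᵥ (E t *ᵥ σ t) := by rw [Matrix.mulVec_mulVec]
    _ = 0 := by rw [h1, Matrix.mulVec_zero]
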